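/- Let G be a group with no elements of order 2 and let H ≤ G be a malnormal subgroup (that is, gHg⁻¹ ∩ H = {1} for every g ∈ G \ H). If g ∈ G satisfies Hg = g⁻¹H (equivalently, the double cosets HgH and Hg⁻¹H coincide as sets and moreover Hg = g⁻¹H), then g ∈ H. -/
import Mathlib

theorem mem_of_coset_eq_inv_coset {G : Type*} [Group G] (H : Subgroup G)
    (hno2 : ∀ x : G, x ^ 2 = 1 → x = 1)
    (hmal : ∀ g : G, g ∉ H → ∀ x ∈ H, g * x * g⁻¹ ∈ H → x = 1)
    (g : G)
    (hcos : {x : G | ∃ h ∈ H, x = h * g} = {x : G | ∃ h ∈ H, x = g⁻¹ * h}) :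
    g ∈ H := by
  have hg : g ∈ {x : G | ∃ h ∈ H, x = h * g} := ⟨1, H.one_mem, by simp⟩
  rw [hcos] at hg
  obtain ⟨h, hh, hgh⟩ := hg
  have hsq : g ^ 2 = h := by
    have := congrArg (g * ·) hgh
    simpa [pow_two, mul_assoc] using this
  by_contra hgH
  have hmem : g ^ 2 ∈ H := hsq ▸ hh
  have hconj : g * g ^ 2 * g⁻¹ ∈ H := by
    simpa [pow_two, mul_assoc] using hmem
  have := hmal g hgH (g ^ 2) hmem hconj
  exact hgH (hno2 g this ▸ H.one_mem)
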